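/- arXiv:1907.11547 — 2 statements merged into one kernel-verified Lean document; each statement's English description precedes it below -/
import Mathlib

section
/- Let (E, μ) be a σ-finite measure space, let T ≥ 1, and let p : E → [0,∞], q_k : E × E → [0,∞] (for k = 1, …, T−1), and g_k, h_k : E → [0,∞] (for k = 1, …, T) all be measurable. Define the joint function J(x_1,…,x_T) := p(x_1) · ∏_{k=1}^{T−1} q_k(x_{k+1}, x_k) · ∏_{k=1}^{T} g_k(x_k) h_k(x_k). Define forward messages recursively by m_fp^1 := p, m_fe1^k := m_fp^k · g_k, m_fe2^k := m_fe1^k · h_k, and m_fp^{k+1}(x') := ∫ q_k(x', x) m_fe2^k(x) dμ(x); define backward messages by m_bp^T :≡ 1, m_be1^k := m_bp^k · h_k, m_be2^k := m_be1^k · g_k, and m_bp^k(x) := ∫ q_k(x', x) m_be2^{k+1}(x') dμ(x') for k < T. Then for every k ∈ {1, …, T} and every x ∈ E, the marginal of J over all coordinates other than x_k, namely ∫ ⋯ ∫ J(x_1, …, x_{k−1}, x, x_{k+1}, …, x_T) ∏_{j ≠ k} dμ(x_j) (computed as an iterated Lebesgue integral of a nonnegative function), equals m_fp^k(x) · m_be2^k(x)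 = m_fe1^k(x) · m_be1^k(x) = m_fe2^k(x) · m_bp^k(x). -/
open MeasureTheory ENNReal

/-- The joint function
`J(x₁,…,x_T) = p(x₁) · ∏_{k=1}^{T−1} q_k(x_{k+1}, x_k) · ∏_{k=1}^{T} g_k(x_k) h_k(x_k)`,
read off an infinite tuple `x : ℕ → E` (coordinates outside `1,…,T` are ignored). -/
noncomputable def jointFun {E : Type*} (T : ℕ) (p : E → ℝ≥0∞)
    (q : ℕ → E → E → ℝ≥0∞) (g h : ℕ → E → ℝ≥0∞) (x : ℕ → E) : ℝ≥0∞ :=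
  p (x 1) * (∏ k ∈ Finset.Icc 1 (T - 1), q k (x (k + 1)) (x k)) *
    ∏ k ∈ Finset.Icc 1 T, g k (x k) * h k (x k)

/-- Extend a configuration of the coordinates `{1,…,T} \ {k}` to a full tuple `ℕ → E`
by putting `x` in the `k`-th coordinate (and anywhere outside `{1,…,T}`). -/
noncomputable def extendAt {E : Type*} (T k : ℕ) (x : E)
    (z : ((Finset.Icc 1 T).erase k : Finset ℕ) → E) : ℕ → E :=
  fun j => if hj : j ∈ (Finset.Icc 1 T).erase k then z ⟨j, hj⟩ else x

set_option linter.unusedSectionVars false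
section SmoothingAux

variable {E : Type*} [MeasurableSpace E]

/-- Forward partial product: depends on coordinates `1, …, k`. -/
noncomputable def smoothA (p : E → ℝ≥0∞) (q : ℕ → E → E → ℝ≥0∞) (g h : ℕ → E → ℝ≥0∞)
    (k : ℕ) (y : ℕ → E) : ℝ≥0∞ :=
  p (y 1) * (∏ j ∈ Finset.Icc 1 (k - 1), q j (y (j + 1)) (y j)) *
    ∏ j ∈ Finset.Icc 1 k, g j (y j) * h j (y j)

/-- Backward partial product: depends on coordinates `k, …, T`. -/
noncomputable def smoothB (T : ℕ) (q : ℕ → E → E → ℝ≥0∞) (g h : ℕ → E → ℝ≥0∞)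
    (k : ℕ) (y : ℕ → E) : ℝ≥0∞ :=
  (∏ j ∈ Finset.Icc k (T - 1), q j (y (j + 1)) (y j)) *
    ∏ j ∈ Finset.Icc (k + 1) T, g j (y j) * h j (y j)

lemma updF_not {s : Finset ℕ} (y : ℕ → E) (z : (i : ↥s) → E) {j : ℕ} (hj : j ∉ s) :
    Function.updateFinset y s z j = y j := by
  simp [Function.updateFinset, hj]

lemma smoothA_congr (p : E → ℝ≥0∞) (q : ℕ → E → E → ℝ≥0∞) (g h : ℕ → E → ℝ≥0∞)
    {k : ℕ} (hk : 1 ≤ k) {y y' : ℕ → E} (hyy : ∀ j ≤ k, y j = y' j) :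
    smoothA p q g h k y = smoothA p q g h k y' := by
  simp only [smoothA]
  rw [hyy 1 hk]
  congr 1
  · congr 1
    refine Finset.prod_congr rfl fun j hj => ?_
    simp only [Finset.mem_Icc] at hj
    rw [hyy j (by omega), hyy (j + 1) (by omega)]
  · refine Finset.prod_congr rfl fun j hj => ?_
    simp only [Finset.mem_Icc] at hj
    rw [hyy j (by omega)]

lemma smoothB_congr (T : ℕ) (q : ℕ → E → E → ℝ≥0∞) (g h : ℕ → E → ℝ≥0∞) (hT : 1 ≤ T)
    {k : ℕ} {y y' : ℕ → E} (hyy : ∀ j, k ≤ j → j ≤ T → y j = y' j) :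
    smoothB T q g h k y = smoothB T q g h k y' := by
  simp only [smoothB]
  congr 1
  · refine Finset.prod_congr rfl fun j hj => ?_
    simp only [Finset.mem_Icc] at hj
    rw [hyy j (by omega) (by omega), hyy (j + 1) (by omega) (by omega)]
  · refine Finset.prod_congr rfl fun j hj => ?_
    simp only [Finset.mem_Icc] at hj
    rw [hyy j (by omega) (by omega)]

variable {p : E → ℝ≥0∞} {q : ℕ → E → E → ℝ≥0∞} {g h : ℕ → E → ℝ≥0∞}
  (hp : Measurable p) (hq : ∀ k, Measurable (Function.uncurry (q k)))
  (hg : ∀ k, Measurable (g k)) (hh : ∀ k, Measurable (h k))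

include hq in
lemma meas_q_comp (j : ℕ) : Measurable (fun y : ℕ → E => q j (y (j + 1)) (y j)) := by
  have : Measurable ((Function.uncurry (q j)) ∘ fun y : ℕ → E => (y (j + 1), y j)) :=
    (hq j).comp ((measurable_pi_apply _).prodMk (measurable_pi_apply _))
  exact this

include hg hh in
lemma meas_gh_comp (j : ℕ) : Measurable (fun y : ℕ → E => g j (y j) * h j (y j)) :=
  ((hg j).comp (measurable_pi_apply _)).mul ((hh j).comp (measurable_pi_apply _))

include hp hq hg hh in
lemma smoothA_measurable (k : ℕ) : Measurable (smoothA p q g h k) := by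
  unfold smoothA
  exact ((hp.comp (measurable_pi_apply 1)).mul
      (Finset.measurable_prod _ fun j _ => meas_q_comp hq j)).mul
    (Finset.measurable_prod _ fun j _ => meas_gh_comp hg hh j)

include hq hg hh in
lemma smoothB_measurable (T k : ℕ) : Measurable (smoothB T q g h k) := by
  unfold smoothB
  exact (Finset.measurable_prod _ fun j _ => meas_q_comp hq j).mul
    (Finset.measurable_prod _ fun j _ => meas_gh_comp hg hh j)

include hp hq hg hh in
lemma jointFun_measurable (T : ℕ) : Measurable (jointFun T p q g h) := by
  unfold jointFun
  exact ((hp.comp (measurable_pi_apply 1)).mul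
      (Finset.measurable_prod _ fun j _ => meas_q_comp hq j)).mul
    (Finset.measurable_prod _ fun j _ => meas_gh_comp hg hh j)

lemma smoothA_succ {k : ℕ} (hk : 1 ≤ k) :
    smoothA p q g h (k + 1) = fun y => smoothA p q g h k y *
      (q k (y (k + 1)) (y k) * (g (k + 1) (y (k + 1)) * h (k + 1) (y (k + 1)))) := by
  obtain ⟨m, rfl⟩ : ∃ m, k = m + 1 := ⟨k - 1, by omega⟩
  funext y
  simp only [smoothA, show m + 1 + 1 - 1 = m + 1 from rfl, show m + 1 - 1 = m from rfl]
  rw [Finset.prod_Icc_succ_top (by omega : 1 ≤ m + 1), Finset.prod_Icc_succ_top (by omega : 1 ≤ m + 1 + 1)]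
  ring

lemma smoothB_split {T k : ℕ} (hk : 1 ≤ k) (hkT : k < T) :
    smoothB T q g h k = fun y =>
      (q k (y (k + 1)) (y k) * (g (k + 1) (y (k + 1)) * h (k + 1) (y (k + 1)))) *
        smoothB T q g h (k + 1) y := by
  funext y
  simp only [smoothB]
  rw [show Finset.Icc k (T - 1) = insert k (Finset.Icc (k + 1) (T - 1)) from by
        ext j; simp only [Finset.mem_Icc, Finset.mem_insert]; omega,
      show Finset.Icc (k + 1) T = insert (k + 1) (Finset.Icc (k + 1 + 1) T) from by
        ext j; simp only [Finset.mem_Icc, Finset.mem_insert]; omega,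
      Finset.prod_insert (by simp [Finset.mem_Icc]),
      Finset.prod_insert (by simp [Finset.mem_Icc])]
  ring

lemma jointFun_split {T k : ℕ} (hk : 1 ≤ k) (hkT : k ≤ T) :
    jointFun T p q g h = fun y => smoothA p q g h k y * smoothB T q g h k y := by
  funext y
  simp only [jointFun, smoothA, smoothB]
  rw [show Finset.Icc 1 (T - 1) = Finset.Icc 1 (k - 1) ∪ Finset.Icc k (T - 1) from by
        ext j; simp only [Finset.mem_Icc, Finset.mem_union]; omega,
      show Finset.Icc 1 T = Finset.Icc 1 k ∪ Finset.Icc (k + 1) T from by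
        ext j; simp only [Finset.mem_Icc, Finset.mem_union]; omega,
      Finset.prod_union (by
        rw [Finset.disjoint_left]; intro j hj hj'
        simp only [Finset.mem_Icc] at hj hj'; omega),
      Finset.prod_union (by
        rw [Finset.disjoint_left]; intro j hj hj'
        simp only [Finset.mem_Icc] at hj hj'; omega)]
  ring

variable (μ : Measure E) [SigmaFinite μ]

lemma lmarginal_mul_left {s : Finset ℕ} (f C : (ℕ → E) → ℝ≥0∞) (hf : Measurable f)
    (hC : ∀ (y : ℕ → E) (z : (i : ↥s) → E), C (Function.updateFinset y s z) = C y)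
    (y : ℕ → E) :
    (∫⋯∫⁻_s, (fun y => C y * f y) ∂(fun _ => μ)) y = C y * (∫⋯∫⁻_s, f ∂(fun _ => μ)) y := by
  simp only [lmarginal]
  rw [← lintegral_const_mul (C y) (show Measurable fun z : (i : ↥s) → E =>
    f (Function.updateFinset y s z) from hf.comp measurable_updateFinset)]
  exact lintegral_congr fun z => by rw [hC]

lemma lmarginal_mul_right {s : Finset ℕ} (f C : (ℕ → E) → ℝ≥0∞) (hf : Measurable f)
    (hC : ∀ (y : ℕ → E) (z : (i : ↥s) → E), C (Function.updateFinset y s z) = C y)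
    (y : ℕ → E) :
    (∫⋯∫⁻_s, (fun y => f y * C y) ∂(fun _ => μ)) y = (∫⋯∫⁻_s, f ∂(fun _ => μ)) y * C y := by
  rw [show (fun y => f y * C y) = fun y => C y * f y from funext fun _ => mul_comm _ _,
    lmarginal_mul_left μ f C hf hC y, mul_comm]

end SmoothingAux

/-- Sum-product message passing computes the marginals of the joint smoothing
function: for every `k ∈ {1,…,T}`, the marginal of `J` over all coordinates other
than `x_k` equals `m_fp^k · m_be2^k = m_fe1^k · m_be1^k = m_fe2^k · m_bp^k`, where
`m_fe1^k = m_fp^k g_k`, `m_fe2^k = m_fe1^k h_k`, `m_be1^k = m_bp^k h_k`,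
`m_be2^k = m_be1^k g_k`, and `m_fp`, `m_bp` satisfy the forward/backward
recursions. -/
theorem smoothing_marginal_factorizations {E : Type*} [MeasurableSpace E]
    (μ : Measure E) [SigmaFinite μ] (T : ℕ) (hT : 1 ≤ T)
    (p : E → ℝ≥0∞) (q : ℕ → E → E → ℝ≥0∞) (g h : ℕ → E → ℝ≥0∞)
    (hp : Measurable p) (hq : ∀ k, Measurable (Function.uncurry (q k)))
    (hg : ∀ k, Measurable (g k)) (hh : ∀ k, Measurable (h k))
    (mfp mbp : ℕ → E → ℝ≥0∞)
    (hfp1 : mfp 1 = p)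
    (hfp : ∀ k, 1 ≤ k → k ≤ T - 1 → ∀ x' : E,
      mfp (k + 1) x' = ∫⁻ x, q k x' x * (mfp k x * g k x * h k x) ∂μ)
    (hbpT : ∀ x : E, mbp T x = 1)
    (hbp : ∀ k, 1 ≤ k → k < T → ∀ x : E,
      mbp k x = ∫⁻ x', q k x' x * (mbp (k + 1) x' * h (k + 1) x' * g (k + 1) x') ∂μ) :
    ∀ k, 1 ≤ k → k ≤ T → ∀ x : E,
      (∫⁻ z : ((Finset.Icc 1 T).erase k : Finset ℕ) → E,
          jointFun T p q g h (extendAt T k x z) ∂(Measure.pi fun _ => μ)) =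
        mfp k x * (mbp k x * h k x * g k x) ∧
      (∫⁻ z : ((Finset.Icc 1 T).erase k : Finset ℕ) → E,
          jointFun T p q g h (extendAt T k x z) ∂(Measure.pi fun _ => μ)) =
        (mfp k x * g k x) * (mbp k x * h k x) ∧
      (∫⁻ z : ((Finset.Icc 1 T).erase k : Finset ℕ) → E,
          jointFun T p q g h (extendAt T k x z) ∂(Measure.pi fun _ => μ)) =
        (mfp k x * g k x * h k x) * mbp k x := by
  classical
  -- measurability of building blocks
  have hA : ∀ k, Measurable (smoothA p q g h k) := smoothA_measurable hp hq hg hh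
  have hB : ∀ k, Measurable (smoothB T q g h k) := smoothB_measurable hq hg hh T
  have hJ : Measurable (jointFun T p q g h) := jointFun_measurable hp hq hg hh T
  -- measurability of the forward messages
  have hmfp : ∀ j, j + 1 ≤ T → Measurable (mfp (j + 1)) := by
    intro j
    induction j with
    | zero => intro _; simpa [hfp1] using hp
    | succ j IH =>
      intro hj
      have hrec := hfp (j + 1) (by omega) (by omega)
      have : mfp (j + 1 + 1) = fun x' =>
          ∫⁻ x, q (j + 1) x' x * (mfp (j + 1) x * g (j + 1) x * h (j + 1) x) ∂μ :=
        funext fun x' => hrec x'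
      rw [this]
      refine Measurable.lintegral_prod_right ?_
      have h1 : Measurable (fun r : E × E => q (j + 1) r.1 r.2) := hq (j + 1)
      exact h1.mul ((((IH (by omega)).comp measurable_snd).mul
        ((hg (j + 1)).comp measurable_snd)).mul ((hh (j + 1)).comp measurable_snd))
  -- forward message passing
  have fwd : ∀ j, j + 1 ≤ T → ∀ y : ℕ → E,
      (∫⋯∫⁻_(Finset.Icc 1 j), smoothA p q g h (j + 1) ∂(fun _ => μ)) y
        = mfp (j + 1) (y (j + 1)) * (g (j + 1) (y (j + 1)) * h (j + 1) (y (j + 1))) := by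
    intro j
    induction j with
    | zero =>
      intro _ y
      rw [show Finset.Icc 1 0 = (∅ : Finset ℕ) from Finset.Icc_eq_empty (by omega),
        lmarginal_empty]
      simp [smoothA, hfp1, mul_assoc]
    | succ j IH =>
      intro hj y
      rw [show Finset.Icc 1 (j + 1) = insert (j + 1) (Finset.Icc 1 j) from by
            ext i; simp only [Finset.mem_Icc, Finset.mem_insert]; omega,
        lmarginal_insert _ (hA _) (by simp only [Finset.mem_Icc]; omega)]
      have step : ∀ t : E,
          (∫⋯∫⁻_(Finset.Icc 1 j), smoothA p q g h (j + 1 + 1) ∂(fun _ => μ))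
              (Function.update y (j + 1) t)
            = (mfp (j + 1) t * (g (j + 1) t * h (j + 1) t)) *
              (q (j + 1) (y (j + 1 + 1)) t *
                (g (j + 1 + 1) (y (j + 1 + 1)) * h (j + 1 + 1) (y (j + 1 + 1)))) := by
        intro t
        rw [smoothA_succ (by omega : 1 ≤ j + 1)]
        rw [lmarginal_mul_right μ (smoothA p q g h (j + 1))
          (fun y => q (j + 1) (y (j + 1 + 1)) (y (j + 1)) *
            (g (j + 1 + 1) (y (j + 1 + 1)) * h (j + 1 + 1) (y (j + 1 + 1)))) (hA _)
          (fun y' z => by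
            rw [updF_not y' z (by simp only [Finset.mem_Icc]; omega),
              updF_not y' z (by simp only [Finset.mem_Icc]; omega)])]
        rw [IH (by omega) (Function.update y (j + 1) t)]
        rw [Function.update_self, Function.update_of_ne (by omega : j + 1 + 1 ≠ j + 1)]
      rw [lintegral_congr step]
      have meas : Measurable (fun t : E =>
          q (j + 1) (y (j + 1 + 1)) t * (mfp (j + 1) t * g (j + 1) t * h (j + 1) t)) := by
        have h1 : Measurable (fun t : E => q (j + 1) (y (j + 1 + 1)) t) :=
          (hq (j + 1)).comp (measurable_const.prodMk measurable_id)
        exact h1.mul (((hmfp j (by omega)).mul (hg (j + 1))).mul (hh (j + 1)))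
      calc ∫⁻ t, (mfp (j + 1) t * (g (j + 1) t * h (j + 1) t)) *
              (q (j + 1) (y (j + 1 + 1)) t *
                (g (j + 1 + 1) (y (j + 1 + 1)) * h (j + 1 + 1) (y (j + 1 + 1)))) ∂μ
          = ∫⁻ t, (q (j + 1) (y (j + 1 + 1)) t * (mfp (j + 1) t * g (j + 1) t * h (j + 1) t)) *
              (g (j + 1 + 1) (y (j + 1 + 1)) * h (j + 1 + 1) (y (j + 1 + 1))) ∂μ :=
            lintegral_congr fun t => by ring
        _ = (∫⁻ t, q (j + 1) (y (j + 1 + 1)) t *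
              (mfp (j + 1) t * g (j + 1) t * h (j + 1) t) ∂μ) *
              (g (j + 1 + 1) (y (j + 1 + 1)) * h (j + 1 + 1) (y (j + 1 + 1))) :=
            lintegral_mul_const _ meas
        _ = mfp (j + 1 + 1) (y (j + 1 + 1)) *
              (g (j + 1 + 1) (y (j + 1 + 1)) * h (j + 1 + 1) (y (j + 1 + 1))) := by
            rw [← hfp (j + 1) (by omega) (by omega)]
  -- backward message passing
  have bwd : ∀ d k, k + d = T → 1 ≤ k → ∀ y : ℕ → E,
      (∫⋯∫⁻_(Finset.Icc (k + 1) T), smoothB T q g h k ∂(fun _ => μ)) y = mbp k (y k) := by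
    intro d
    induction d with
    | zero =>
      intro k hkd hk1 y
      have hkT : k = T := by omega
      subst hkT
      rw [show Finset.Icc (k + 1) k = (∅ : Finset ℕ) from Finset.Icc_eq_empty (by omega),
        lmarginal_empty]
      rw [show smoothB k q g h k y = 1 from by
        simp [smoothB, Finset.Icc_eq_empty (show ¬ k ≤ k - 1 by omega),
          Finset.Icc_eq_empty (show ¬ k + 1 ≤ k by omega)]]
      rw [hbpT]
    | succ d IH =>
      intro k hkd hk1 y
      rw [show Finset.Icc (k + 1) T = insert (k + 1) (Finset.Icc (k + 1 + 1) T) from by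
            ext i; simp only [Finset.mem_Icc, Finset.mem_insert]; omega,
        lmarginal_insert _ (hB _) (by simp only [Finset.mem_Icc]; omega)]
      have step : ∀ t : E,
          (∫⋯∫⁻_(Finset.Icc (k + 1 + 1) T), smoothB T q g h k ∂(fun _ => μ))
              (Function.update y (k + 1) t)
            = (q k t (y k) * (g (k + 1) t * h (k + 1) t)) * mbp (k + 1) t := by
        intro t
        rw [smoothB_split hk1 (show k < T by omega)]
        rw [lmarginal_mul_left μ (smoothB T q g h (k + 1))
          (fun y => q k (y (k + 1)) (y k) * (g (k + 1) (y (k + 1)) * h (k + 1) (y (k + 1))))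
          (hB _)
          (fun y' z => by
            rw [updF_not y' z (by simp only [Finset.mem_Icc]; omega),
              updF_not y' z (by simp only [Finset.mem_Icc]; omega)])]
        rw [IH (k + 1) (by omega) (by omega) (Function.update y (k + 1) t)]
        rw [Function.update_self, Function.update_of_ne (by omega : k ≠ k + 1)]
      rw [lintegral_congr step, hbp k hk1 (by omega) (y k)]
      exact lintegral_congr fun t => by ring
  -- assembling
  intro k hk1 hkT x
  obtain ⟨m, rfl⟩ : ∃ m, k = m + 1 := ⟨k - 1, by omega⟩
  have key : (∫⁻ z : ((Finset.Icc 1 T).erase (m + 1) : Finset ℕ) → E,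
      jointFun T p q g h (extendAt T (m + 1) x z) ∂(Measure.pi fun _ => μ))
        = mfp (m + 1) x * g (m + 1) x * h (m + 1) x * mbp (m + 1) x := by
    have h0 : (∫⁻ z : ((Finset.Icc 1 T).erase (m + 1) : Finset ℕ) → E,
        jointFun T p q g h (extendAt T (m + 1) x z) ∂(Measure.pi fun _ => μ))
          = (∫⋯∫⁻_((Finset.Icc 1 T).erase (m + 1)), jointFun T p q g h ∂(fun _ => μ))
            (fun _ => x) := rfl
    rw [h0,
      show (Finset.Icc 1 T).erase (m + 1) = Finset.Icc 1 m ∪ Finset.Icc (m + 1 + 1) T from by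
        ext i; simp only [Finset.mem_erase, Finset.mem_Icc, Finset.mem_union]; omega,
      lmarginal_union _ _ hJ (by
        rw [Finset.disjoint_left]; intro i hi hi'
        simp only [Finset.mem_Icc] at hi hi'; omega)]
    have inner : ∀ y : ℕ → E,
        (∫⋯∫⁻_(Finset.Icc (m + 1 + 1) T), jointFun T p q g h ∂(fun _ => μ)) y
          = smoothA p q g h (m + 1) y * mbp (m + 1) (y (m + 1)) := by
      intro y
      rw [jointFun_split (show 1 ≤ m + 1 by omega) hkT]
      rw [lmarginal_mul_left μ (smoothB T q g h (m + 1)) (smoothA p q g h (m + 1)) (hB _)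
        (fun y' z => smoothA_congr p q g h (by omega)
          (fun j hj => updF_not y' z (by simp only [Finset.mem_Icc]; omega)))]
      rw [bwd (T - (m + 1)) (m + 1) (by omega) (by omega) y]
    rw [show (∫⋯∫⁻_(Finset.Icc (m + 1 + 1) T), jointFun T p q g h ∂(fun _ => μ))
        = fun y => smoothA p q g h (m + 1) y * mbp (m + 1) (y (m + 1)) from funext inner]
    rw [lmarginal_mul_right μ (smoothA p q g h (m + 1)) (fun y => mbp (m + 1) (y (m + 1)))
      (hA _) (fun y' z => by rw [updF_not y' z (by simp only [Finset.mem_Icc]; omega)]) (fun _ => x)]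
    rw [fwd m hkT (fun _ => x)]
    ring
  refine ⟨?_, ?_, ?_⟩ <;> rw [key] <;> ring
end

section
/- Let T and D_L be positive integers, let D_N be a nonnegative integer, set D := D_L + D_N, and let N_p ≥ 2 be an integer. Define M_MPF := N_p·T·(2·D_L² + 2·D_L + D_N + 1), M_SDBF := T·(2·D_L² + 2·D_L + N_p·D_N + N_p), M_RBSS := M_MPF + D_L² + D, and M_DDBSA := M_SDBF + N_p + D_L² + D. Then M_DDBSA < M_RBSS. (This establishes the paper's claim that the memory requirement of the disjoint double Bayesian smoothing algorithm is smaller than that of the Rao-Blackwellized serial smoother.) -/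
/-- The memory requirement of the disjoint double Bayesian smoothing algorithm
(DDBSA) is smaller than that of the RBSS algorithm:
`M_DDBSA = M_SDBF + N_p + D_L² + D < M_RBSS = M_MPF + D_L² + D`. -/
theorem mem_DDBSA_lt_RBSS (T DL : ℕ) (hT : 0 < T) (hDL : 0 < DL) (DN : ℕ)
    (Np : ℕ) (hNp : 2 ≤ Np) :
    T * (2 * DL ^ 2 + 2 * DL + Np * DN + Np) + Np + DL ^ 2 + (DL + DN) <
      Np * T * (2 * DL ^ 2 + 2 * DL + DN + 1) + DL ^ 2 + (DL + DN) := by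
  have h1 : 1 ≤ T := hT
  have h2 : 1 ≤ DL := hDL
  nlinarith [mul_le_mul h1 h2 (Nat.zero_le _) (Nat.zero_le _), sq_nonneg DL,
    Nat.mul_le_mul h1 (Nat.mul_le_mul h2 h2), hNp, hT, hDL]
end
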